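/- Let q be a probability vector on a finite set Δ° with q(x) ≥ δ_0 > 0 for all x, and let p, p̃ be probability vectors with p(x) ≥ δ and p̃(x) ≥ δ for all x, where 0 < δ < 1. Then |R(p ‖ q) - R(p̃ ‖ q)| ≤ (|log δ_0| + |log δ| + 1) · ‖p - p̃‖_1. -/
import Mathlib


open Real

lemma aux_key (δ₀ δ c : ℝ) (hδ₀ : 0 < δ₀) (hδ : 0 < δ) (hδ1 : δ < 1)
    (hc : δ₀ ≤ c) (hc1 : c ≤ 1) (a b : ℝ) (ha : a ∈ Set.Icc δ 1) (hb : b ∈ Set.Icc δ 1) :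
    |a * Real.log (a / c) - b * Real.log (b / c)| ≤ (|Real.log δ₀| + |Real.log δ| + 1) * |a - b| := by
  have hc0 : 0 < c := lt_of_lt_of_le hδ₀ hc
  have ha0 : 0 < a := lt_of_lt_of_le hδ ha.1
  have hb0 : 0 < b := lt_of_lt_of_le hδ hb.1
  set g : ℝ → ℝ := fun t => t * Real.log t - t * Real.log c with hg
  have hga : a * Real.log (a / c) = g a := by
    rw [hg]; simp [Real.log_div (ne_of_gt ha0) (ne_of_gt hc0), mul_sub]
  have hgb : b * Real.log (b / c) = g b := by
    rw [hg]; simp [Real.log_div (ne_of_gt hb0) (ne_of_gt hc0), mul_sub]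
  rw [hga, hgb]
  have hconv : Convex ℝ (Set.Icc δ 1) := convex_Icc _ _
  have key := hconv.norm_image_sub_le_of_norm_hasDerivWithin_le
    (f := g) (f' := fun t => Real.log t + 1 - Real.log c)
    (C := |Real.log δ₀| + |Real.log δ| + 1) ?_ ?_ hb ha
  · simpa [Real.norm_eq_abs] using key
  · intro t ht
    have ht0 : 0 < t := lt_of_lt_of_le hδ ht.1
    have h1 : HasDerivAt (fun x : ℝ => x * Real.log x) (Real.log t + 1) t :=
      Real.hasDerivAt_mul_log (ne_of_gt ht0)
    have h2 : HasDerivAt (fun x : ℝ => x * Real.log c) (Real.log c) t := by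
      simpa using (hasDerivAt_id t).mul_const (Real.log c)
    exact (h1.sub h2).hasDerivWithinAt
  · intro t ht
    have ht0 : 0 < t := lt_of_lt_of_le hδ ht.1
    have hlt : Real.log t ≤ 0 := Real.log_nonpos (le_of_lt ht0) ht.2
    have hltδ : Real.log δ ≤ Real.log t := Real.log_le_log hδ ht.1
    have hlc : Real.log c ≤ 0 := Real.log_nonpos (le_of_lt hc0) hc1
    have hlcδ : Real.log δ₀ ≤ Real.log c := Real.log_le_log hδ₀ hc
    have h1 : |Real.log t| ≤ |Real.log δ| := by
      rw [abs_of_nonpos hlt, abs_of_nonpos (hltδ.trans hlt)]; linarith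
    have h2 : |Real.log c| ≤ |Real.log δ₀| := by
      rw [abs_of_nonpos hlc, abs_of_nonpos (hlcδ.trans hlc)]; linarith
    have : |Real.log t + 1 - Real.log c| ≤ |Real.log t| + |Real.log c| + 1 := by
      calc |Real.log t + 1 - Real.log c| ≤ |Real.log t + 1| + |Real.log c| := abs_sub _ _
        _ ≤ |Real.log t| + 1 + |Real.log c| := by
            have := abs_add_le (Real.log t) 1
            simpa using this
        _ = |Real.log t| + |Real.log c| + 1 := by ring
    rw [Real.norm_eq_abs]
    linarith

/-- Relative entropy of probability vectors on a finite set. -/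
noncomputable def relEnt {d : ℕ} (ν μ : Fin d → ℝ) : ℝ := ∑ x, ν x * Real.log (ν x / μ x)

/-- If `q ≥ δ₀ > 0` componentwise and `p, p̃ ≥ δ` componentwise with `0 < δ < 1`, then
`|R(p‖q) - R(p̃‖q)| ≤ (|log δ₀| + |log δ| + 1) ‖p - p̃‖₁`. -/
theorem relEnt_first_arg_lipschitz {d : ℕ} (δ₀ δ : ℝ) (hδ₀ : 0 < δ₀)
    (hδ : 0 < δ) (hδ1 : δ < 1)
    (p p' q : Fin d → ℝ) (hp : p ∈ stdSimplex ℝ (Fin d))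
    (hp' : p' ∈ stdSimplex ℝ (Fin d)) (hq : q ∈ stdSimplex ℝ (Fin d))
    (hqδ : ∀ x, δ₀ ≤ q x) (hpδ : ∀ x, δ ≤ p x) (hp'δ : ∀ x, δ ≤ p' x) :
    |relEnt p q - relEnt p' q| ≤ (|Real.log δ₀| + |Real.log δ| + 1) * ∑ x, |p x - p' x| := by
  have hp1 : ∀ x, p x ≤ 1 := fun x => hp.2 ▸ Finset.single_le_sum (fun i _ => hp.1 i) (Finset.mem_univ x)
  have hp'1 : ∀ x, p' x ≤ 1 := fun x => hp'.2 ▸ Finset.single_le_sum (fun i _ => hp'.1 i) (Finset.mem_univ x)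
  have hq1 : ∀ x, q x ≤ 1 := fun x => hq.2 ▸ Finset.single_le_sum (fun i _ => hq.1 i) (Finset.mem_univ x)
  rw [relEnt, relEnt, ← Finset.sum_sub_distrib]
  calc |∑ x, (p x * Real.log (p x / q x) - p' x * Real.log (p' x / q x))|
      ≤ ∑ x, |p x * Real.log (p x / q x) - p' x * Real.log (p' x / q x)| :=
        Finset.abs_sum_le_sum_abs _ _
    _ ≤ ∑ x, (|Real.log δ₀| + |Real.log δ| + 1) * |p x - p' x| := by
        apply Finset.sum_le_sum
        intro x _
        exact aux_key δ₀ δ (q x) hδ₀ hδ hδ1 (hqδ x) (hq1 x) (p x) (p' x)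
          ⟨hpδ x, hp1 x⟩ ⟨hp'δ x, hp'1 x⟩
    _ = (|Real.log δ₀| + |Real.log δ| + 1) * ∑ x, |p x - p' x| := by
        rw [Finset.mul_sum]
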